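/- For any two equal-length strings X and Y over a linearly ordered alphabet, X and Y Cartesian-tree match (their Cartesian trees are isomorphic as ordered trees) if and only if PD_X = PD_Y, where PD is the parent-distance encoding. -/

import Mathlib

/-- unlabeled ordered binary trees -/
inductive BT : Type
  | leaf : BT
  | node : BT → BT → BT
deriving DecidableEq

/-- Cartesian tree, computed with a fuel argument (fuel `≥` length suffices). -/
def ctAux {α : Type*} [LinearOrder α] : ℕ → List α → BT
  | 0, _ => .leaf
  | _, [] => .leaf
  | n + 1, x :: xs =>
    let l := x :: xs
    let i := l.idxOf (xs.foldl min x)   -- leftmost position of the minimum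
    .node (ctAux n (l.take i)) (ctAux n (l.drop (i + 1)))

/-- the Cartesian tree `CT(l)` of a string `l`. -/
def ctree {α : Type*} [LinearOrder α] (l : List α) : BT :=
  ctAux l.length l

/-- parent-distance value at (0-indexed) position `p`. -/
def pdAt {α : Type*} [LinearOrder α] [Inhabited α] (T : List α) (p : ℕ) : ℕ :=
  match ((List.range p).filter (fun q => T.getD q default ≤ T.getD p default)).max? with
  | some q => p - q
  | none => 0

/-- the parent-distance encoding `PD_T` of `T`. -/
def pd {α : Type*} [LinearOrder α] [Inhabited α] (T : List α) : List ℕ :=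
  (List.range T.length).map (pdAt T)

namespace Stmt8Aux

open List

lemma natmax?_eq_some_iff {l : List ℕ} {a : ℕ} :
    l.max? = some a ↔ a ∈ l ∧ ∀ b ∈ l, b ≤ a :=
  List.max?_eq_some_iff

/-- replace each `0` at index `p` by `p+1`. -/
def fixup (l : List ℕ) : List ℕ := l.mapIdx (fun p v => if v = 0 then p + 1 else v)

@[simp] lemma length_fixup (l : List ℕ) : (fixup l).length = l.length := by
  simp [fixup]

lemma getElem_fixup (l : List ℕ) (p : ℕ) (h : p < (fixup l).length) :
    (fixup l)[p] = if l[p]'(by simpa using h) = 0 then p + 1 else l[p]'(by simpa using h) := by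
  simp [fixup]

lemma zero_not_mem_fixup (l : List ℕ) : 0 ∉ fixup l := by
  intro hmem
  obtain ⟨p, hp, hval⟩ := List.mem_iff_getElem.1 hmem
  rw [getElem_fixup] at hval
  split at hval <;> omega

/-- boundedness of parent-distance style lists: entry at `p` is `≤ p`. -/
def Bdd (l : List ℕ) : Prop := ∀ p (h : p < l.length), l[p] ≤ p

lemma fixup_inj {l l' : List ℕ} (hb : Bdd l) (hb' : Bdd l')
    (h : fixup l = fixup l') : l = l' := by
  have hlen : l.length = l'.length := by
    have := congrArg List.length h
    simpa using this
  apply List.ext_getElem hlen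
  intro p h1 h2
  have this : (fixup l)[p]'(by simpa using h1) = (fixup l')[p]'(by simpa using h2) :=
    List.getElem_of_eq h _
  rw [getElem_fixup, getElem_fixup] at this
  have b1 := hb p h1
  have b2 := hb' p h2
  split at this <;> split at this <;> omega

def phi : BT → List ℕ
  | .leaf => []
  | .node L R => phi L ++ 0 :: fixup (phi R)

lemma bdd_phi : ∀ t, Bdd (phi t) := by
  intro t
  induction t with
  | leaf => intro p h; simp [phi] at h
  | node L R ihL ihR =>
    intro p h
    simp only [phi] at h ⊢
    rcases lt_trichotomy p (phi L).length with hp | hp | hp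
    · rw [List.getElem_append_left hp]; exact ihL p hp
    · rw [List.getElem_append_right (le_of_eq hp.symm)]
      simp only [hp, Nat.sub_self, List.getElem_cons_zero]
      omega
    · rw [List.getElem_append_right (le_of_lt hp)]
      obtain ⟨k, rfl⟩ := Nat.exists_eq_add_of_lt hp
      have h3 : k < (fixup (phi R)).length := by
        simp only [List.length_append, List.length_cons] at h
        omega
      simp only [show (phi L).length + k + 1 - (phi L).length = k + 1 from by omega,
        List.getElem_cons_succ]
      rw [getElem_fixup _ _ h3]
      have := ihR k (by simpa using h3)
      split <;> omega

/-- splitting at the first zero is unique -/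
lemma first_split : ∀ (a : List ℕ) (c b d : List ℕ), a ++ 0 :: b = c ++ 0 :: d →
    0 ∉ a → 0 ∉ c → a = c ∧ b = d := by
  intro a
  induction a with
  | nil =>
    intro c b d h ha hc
    cases c with
    | nil => simpa using h
    | cons e c' =>
      simp only [List.nil_append, List.cons_append, List.cons.injEq] at h
      exact absurd (h.1 ▸ (List.mem_cons_self (a := e) (l := c'))) hc
  | cons e a' ih =>
    intro c b d h ha hc
    cases c with
    | nil =>
      simp only [List.nil_append, List.cons_append, List.cons.injEq] at h
      exact absurd (h.1 ▸ (List.mem_cons_self (a := e) (l := a'))) ha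
    | cons f c' =>
      simp only [List.cons_append, List.cons.injEq] at h
      obtain ⟨h1, h2⟩ := ih c' b d h.2 (fun hx => ha (List.mem_cons_of_mem _ hx))
        (fun hx => hc (List.mem_cons_of_mem _ hx))
      exact ⟨by rw [h.1, h1], h2⟩

/-- splitting at the last zero is unique -/
lemma last_split {u v u' v' : List ℕ} (h : u ++ 0 :: v = u' ++ 0 :: v')
    (hv : 0 ∉ v) (hv' : 0 ∉ v') : u = u' ∧ v = v' := by
  have hr : v.reverse ++ 0 :: u.reverse = v'.reverse ++ 0 :: u'.reverse := by
    have := congrArg List.reverse h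
    simpa [List.reverse_append] using this
  obtain ⟨h1, h2⟩ := first_split _ _ _ _ hr (by simpa using hv) (by simpa using hv')
  constructor
  · simpa using congrArg List.reverse h2
  · simpa using congrArg List.reverse h1

lemma phi_inj : ∀ s t : BT, phi s = phi t → s = t := by
  intro s
  induction s with
  | leaf =>
    intro t h
    cases t with
    | leaf => rfl
    | node L R =>
      exfalso
      simp only [phi] at h
      have : (0 : ℕ) ∈ ([] : List ℕ) := by
        rw [h]; exact List.mem_append_right _ List.mem_cons_self
      simp at this
  | node L R ihL ihR =>
    intro t h
    cases t with
    | leaf =>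
      exfalso
      simp only [phi] at h
      have : (0 : ℕ) ∈ ([] : List ℕ) := by
        rw [← h]; exact List.mem_append_right _ List.mem_cons_self
      simp at this
    | node L' R' =>
      simp only [phi] at h
      obtain ⟨h1, h2⟩ := last_split h (zero_not_mem_fixup _) (zero_not_mem_fixup _)
      rw [ihL _ h1, ihR _ (fixup_inj (bdd_phi R) (bdd_phi R') h2)]

section withOrder
variable {α : Type*} [LinearOrder α] [Inhabited α]

lemma foldl_min_mem : ∀ (xs : List α) (x : α), xs.foldl min x ∈ x :: xs := by
  intro xs
  induction xs with
  | nil => intro x; simp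
  | cons y ys ih =>
    intro x
    have := ih (min x y)
    rcases List.mem_cons.1 this with h | h
    · rcases min_choice x y with h' | h'
      · rw [List.foldl_cons, h, h']; exact List.mem_cons_self
      · rw [List.foldl_cons, h, h']
        exact List.mem_cons_of_mem _ List.mem_cons_self
    · rw [List.foldl_cons]
      exact List.mem_cons_of_mem _ (List.mem_cons_of_mem _ h)

lemma foldl_min_le : ∀ (xs : List α) (x : α), ∀ a ∈ x :: xs, xs.foldl min x ≤ a := by
  intro xs
  induction xs with
  | nil =>
    intro x a ha
    have : a = x := by simpa using ha
    simp [this]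
  | cons y ys ih =>
    intro x a ha
    rw [List.foldl_cons]
    rcases List.mem_cons.1 ha with h | h
    · subst h
      calc ys.foldl min (min a y) ≤ min a y := ih _ _ List.mem_cons_self
        _ ≤ a := min_le_left _ _
    · rcases List.mem_cons.1 h with h' | h'
      · subst h'
        calc ys.foldl min (min x a) ≤ min x a := ih _ _ List.mem_cons_self
          _ ≤ a := min_le_right _ _
      · exact ih (min x y) a (List.mem_cons_of_mem _ h')

lemma ctAux_eq : ∀ (n : ℕ) (l : List α), l.length ≤ n → ctAux n l = ctree l := by
  intro n
  induction n using Nat.strong_induction_on with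
  | _ n ih =>
  intro l h
  match n, l with
  | 0, l =>
    have : l = [] := List.length_eq_zero_iff.1 (Nat.le_zero.1 h)
    subst this; rfl
  | n + 1, [] => rfl
  | n + 1, x :: xs =>
    have hmem : xs.foldl min x ∈ x :: xs := foldl_min_mem xs x
    have hi : (x :: xs).idxOf (xs.foldl min x) < (x :: xs).length :=
      List.idxOf_lt_length_iff.2 hmem
    simp only [List.length_cons] at hi h
    rw [ctree]
    simp only [List.length_cons, ctAux]
    congr 1
    · rw [ih n (by omega) _ (by simp only [List.length_take, List.length_cons]; omega),
        ih xs.length (by omega) _ (by simp only [List.length_take, List.length_cons]; omega)]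
    · rw [ih n (by omega) _ (by simp only [List.length_drop, List.length_cons]; omega),
        ih xs.length (by omega) _ (by simp only [List.length_drop, List.length_cons]; omega)]

lemma ctree_cons (x : α) (xs : List α) :
    ctree (x :: xs) = .node (ctree ((x :: xs).take ((x :: xs).idxOf (xs.foldl min x))))
      (ctree ((x :: xs).drop ((x :: xs).idxOf (xs.foldl min x) + 1))) := by
  have hmem : xs.foldl min x ∈ x :: xs := foldl_min_mem xs x
  have hi : (x :: xs).idxOf (xs.foldl min x) < (x :: xs).length :=
    List.idxOf_lt_length_iff.2 hmem
  simp only [List.length_cons] at hi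
  rw [ctree]
  simp only [List.length_cons, ctAux]
  congr 1
  · exact ctAux_eq _ _ (by simp only [List.length_take, List.length_cons]; omega)
  · exact ctAux_eq _ _ (by simp only [List.length_drop, List.length_cons]; omega)

/-- pdAt only depends on the prefix. -/
lemma pdAt_append (l m : List α) (p : ℕ) (hp : p < l.length) :
    pdAt (l ++ m) p = pdAt l p := by
  unfold pdAt
  have hfil : ((List.range p).filter
        (fun q => decide ((l ++ m).getD q default ≤ (l ++ m).getD p default))) =
      ((List.range p).filter (fun q => decide (l.getD q default ≤ l.getD p default))) := by
    apply List.filter_congr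
    intro q hq
    have hq' : q < p := List.mem_range.1 hq
    rw [List.getD_append _ _ _ _ (by omega), List.getD_append _ _ _ _ hp]
  rw [hfil]

/-- at a left-to-right strict minimum, pdAt is 0. -/
lemma pdAt_min (l : List α) (i : ℕ) (hi : i < l.length)
    (hstrict : ∀ q (h : q < i), l[i]'hi < l[q]'(by omega)) :
    pdAt l i = 0 := by
  unfold pdAt
  have hfil : ((List.range i).filter
      (fun q => decide (l.getD q default ≤ l.getD i default))) = [] := by
    rw [List.filter_eq_nil_iff]
    intro q hq
    have hq' : q < i := List.mem_range.1 hq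
    rw [List.getD_eq_getElem _ _ (by omega : q < l.length), List.getD_eq_getElem _ _ hi]
    simpa using (hstrict q hq')
  rw [hfil]
  rfl

/-- pdAt of positions after the minimum. -/
lemma pdAt_after (l : List α) (i : ℕ) (hi : i < l.length)
    (hmin : ∀ q (h : q < l.length), l[i]'hi ≤ l[q]'h)
    (p' : ℕ) (hp' : p' < (l.drop (i + 1)).length) :
    pdAt l (i + 1 + p') =
      if pdAt (l.drop (i + 1)) p' = 0 then p' + 1 else pdAt (l.drop (i + 1)) p' := by
  set S := l.drop (i + 1) with hS
  have hlenS : S.length = l.length - (i + 1) := by simp [hS]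
  have hP : i + 1 + p' < l.length := by omega
  have hgetP : l.getD (i + 1 + p') default = S.getD p' default := by
    rw [List.getD_eq_getElem _ _ hP, List.getD_eq_getElem _ _ hp']
    simp [hS, List.getElem_drop]
  have hgetq : ∀ q, q < p' → l.getD (i + 1 + q) default = S.getD q default := by
    intro q hq
    rw [List.getD_eq_getElem _ _ (by omega : i + 1 + q < l.length),
        List.getD_eq_getElem _ _ (by omega : q < S.length)]
    simp [hS, List.getElem_drop]
  unfold pdAt
  rw [List.range_add, List.filter_append, List.filter_map]
  set c : ℕ → Bool := fun q => decide (l.getD q default ≤ l.getD (i + 1 + p') default) with hc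
  set cS : ℕ → Bool := fun q => decide (S.getD q default ≤ S.getD p' default) with hcS
  have hcomp : (List.range p').filter (c ∘ fun x => i + 1 + x) =
      (List.range p').filter cS := by
    apply List.filter_congr
    intro q hq
    have hq' : q < p' := List.mem_range.1 hq
    simp only [Function.comp, hc, hcS, hgetq q hq', hgetP]
  rw [hcomp]
  have hiF : i ∈ (List.range (i + 1)).filter c := by
    rw [List.mem_filter]
    refine ⟨List.mem_range.2 (by omega), ?_⟩
    simp only [hc, decide_eq_true_eq]
    rw [List.getD_eq_getElem _ _ (by omega : i < l.length), List.getD_eq_getElem _ _ hP]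
    exact hmin _ hP
  rcases hF' : ((List.range p').filter cS).max? with _ | a
  · -- no previous ≤ within the suffix
    have : (List.range p').filter cS = [] := List.max?_eq_none_iff.1 hF'
    rw [this]
    simp only [List.map_nil, List.append_nil]
    have hmax : ((List.range (i + 1)).filter c).max? = some i := by
      rw [natmax?_eq_some_iff]
      refine ⟨hiF, ?_⟩
      intro b hb
      have := List.mem_range.1 (List.mem_of_mem_filter hb)
      omega
    rw [hmax]
    simp only [List.max?_nil]
    norm_num
    omega
  · -- there is a previous ≤ within the suffix
    obtain ⟨haF, hamax⟩ := natmax?_eq_some_iff.1 hF'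
    have ha_lt : a < p' := List.mem_range.1 (List.mem_of_mem_filter haF)
    have hmax : (((List.range (i + 1)).filter c) ++
        ((List.range p').filter cS).map (fun x => i + 1 + x)).max? = some (i + 1 + a) := by
      rw [natmax?_eq_some_iff]
      constructor
      · exact List.mem_append_right _ (List.mem_map_of_mem haF)
      · intro b hb
        rcases List.mem_append.1 hb with hb | hb
        · have := List.mem_range.1 (List.mem_of_mem_filter hb)
          omega
        · obtain ⟨b', hb', rfl⟩ := List.mem_map.1 hb
          have := hamax b' hb'
          omega
    rw [hmax]
    have : p' - a ≠ 0 := by omega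
    simp only [if_neg this]
    omega

lemma pd_decomp (l : List α) (i : ℕ) (hi : i < l.length)
    (hmin : ∀ q (h : q < l.length), l[i]'hi ≤ l[q]'h)
    (hstrict : ∀ q (h : q < i), l[i]'hi < l[q]'(by omega)) :
    pd l = pd (l.take i) ++ 0 :: fixup (pd (l.drop (i + 1))) := by
  have hlt : (l.take i).length = i := by simp [List.length_take]; omega
  have hld : (l.drop (i + 1)).length = l.length - (i + 1) := by simp
  apply List.ext_getElem
  · simp [pd, hlt, hld]; omega
  · intro p h1 h2
    simp only [pd, List.length_map, List.length_range] at h1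
    simp only [pd, List.getElem_map, List.getElem_range]
    rcases lt_trichotomy p i with hp | hp | hp
    · -- prefix
      rw [List.getElem_append_left (by simp [pd, hlt]; omega)]
      simp only [pd, List.getElem_map, List.getElem_range]
      conv_lhs => rw [← List.take_append_drop i l]
      exact pdAt_append _ _ _ (by omega)
    · -- the minimum itself
      subst hp
      rw [List.getElem_append_right (by simp [pd, hlt])]
      simp only [pd, List.length_map, List.length_range, hlt, Nat.sub_self,
        List.getElem_cons_zero]
      exact pdAt_min l p h1 hstrict
    · -- suffix
      obtain ⟨k, rfl⟩ := Nat.exists_eq_add_of_lt hp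
      rw [List.getElem_append_right (by simp [pd, hlt]; omega)]
      have hb : k < (fixup (pd (l.drop (i + 1)))).length := by
        simp [pd, hld]; omega
      simp only [pd, List.getElem_map, List.getElem_range, List.length_map,
        List.length_range, hlt,
        show i + k + 1 - i = k + 1 from by omega, List.getElem_cons_succ]
      rw [getElem_fixup _ _ (by simpa [pd] using hb)]
      simp only [List.getElem_map, List.getElem_range]
      have key := pdAt_after l i hi hmin k (by simp only [hld]; omega)
      rw [show i + 1 + k = i + k + 1 from by omega] at key
      rw [key]

lemma phi_ctree (T : List α) : phi (ctree T) = pd T := by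
  suffices H : ∀ (n : ℕ) (T : List α), T.length = n → phi (ctree T) = pd T from H _ T rfl
  intro n
  induction n using Nat.strong_induction_on with
  | _ n ih =>
  intro T hn
  cases T with
  | nil =>
    simp only [ctree, List.length_nil]
    rfl
  | cons x xs =>
    subst hn
    set m := xs.foldl min x with hm
    set i := (x :: xs).idxOf m with hidef
    set l := x :: xs with hl
    have hmem : m ∈ l := foldl_min_mem xs x
    have hi : i < l.length := List.idxOf_lt_length_iff.2 hmem
    have hval : l[i] = m := List.getElem_idxOf hi
    have hmin : ∀ q (h : q < l.length), l[i]'hi ≤ l[q]'h := by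
      intro q h
      rw [hval]
      exact foldl_min_le xs x _ (List.getElem_mem _)
    have hstrict : ∀ q (h : q < i), l[i]'hi < l[q]'(by omega) := by
      intro q h
      have hne : (l[q]'(by omega) == m) = false := by
        have := List.not_of_lt_findIdx (p := fun y => y == m) (xs := l)
          (i := q) h
        simpa using this
      have hne' : l[q]'(by omega) ≠ m := by simpa using hne
      exact lt_of_le_of_ne (hmin q (by omega)) (fun hh => hne' (hh ▸ hval))
    rw [ctree_cons, phi]
    rw [ih (l.take i).length (by simp [List.length_take] at *; omega) _ rfl,
        ih (l.drop (i + 1)).length (by simp at *; omega) _ rfl]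
    exact (pd_decomp l i hi hmin hstrict).symm

end withOrder

end Stmt8Aux

theorem stmt8 {α : Type*} [LinearOrder α] [Inhabited α] (X Y : List α)
    (h : X.length = Y.length) :
    ctree X = ctree Y ↔ pd X = pd Y := by
  constructor
  · intro hc
    rw [← Stmt8Aux.phi_ctree X, ← Stmt8Aux.phi_ctree Y, hc]
  · intro hp
    exact Stmt8Aux.phi_inj _ _ (by rw [Stmt8Aux.phi_ctree, Stmt8Aux.phi_ctree, hp])
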